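/- Let ℓ and p be distinct primes and n, k coprime positive integers. Let Φ_ℓ(x) = 1 + x + ⋯ + x^{ℓ−1} and D(x) = Φ_ℓ(x)^n + p^k. Then v_p(disc(D)) = (ℓ−1)(n·v_p(n) + k(n−1)). -/

import Mathlib

open Polynomial Matrix

section helpers

lemma multiset_prod_prod_comm {α β γ : Type*} [CommMonoid γ] (s : Multiset α) (t : Multiset β)
    (f : α → β → γ) :
    (s.map fun a => (t.map (f a)).prod).prod
      = (t.map fun b => (s.map fun a => f a b).prod).prod := by
  induction s using Multiset.induction_on with
  | empty => simp
  | cons a s ih =>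
      simp only [Multiset.map_cons, Multiset.prod_cons, ih, ← Multiset.prod_map_mul]

lemma multiset_prod_map_const_mul {α γ : Type*} [CommMonoid γ] (s : Multiset α) (c : γ)
    (f : α → γ) :
    (s.map fun a => c * f a).prod = c ^ Multiset.card s * (s.map f).prod := by
  induction s using Multiset.induction_on with
  | empty => simp
  | cons a s ih =>
      simp only [Multiset.map_cons, Multiset.prod_cons, ih, Multiset.card_cons, pow_succ]
      simp [mul_assoc, mul_comm, mul_left_comm]

lemma multiset_prod_map_neg' {α γ : Type*} [CommRing γ] (s : Multiset α) (f : α → γ) :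
    (s.map fun a => -f a).prod = (-1) ^ Multiset.card s * (s.map f).prod := by
  have h : (s.map fun a => -f a) = s.map fun a => (-1) * f a := by simp
  rw [h, multiset_prod_map_const_mul]

variable {K : Type*} [Field K]

lemma key_swap (A B : K[X]) (hA : A.Monic) (hAs : A.Splits)
    (hBs : B.Splits) :
    (A.roots.map fun a => B.eval a).prod
      = B.leadingCoeff ^ Multiset.card A.roots
        * (-1) ^ (Multiset.card A.roots * Multiset.card B.roots)
        * (B.roots.map fun b => A.eval b).prod := by
  have hevalB : ∀ a : K, B.eval a = B.leadingCoeff * (B.roots.map fun b => a - b).prod := by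
    intro a
    conv_lhs => rw [hBs.eq_prod_roots]
    rw [eval_mul, eval_C, eval_multiset_prod, Multiset.map_map]
    simp [Function.comp]
  have hevalA : ∀ b : K, A.eval b = (A.roots.map fun a => b - a).prod := by
    intro b
    conv_lhs => rw [hAs.eq_prod_roots_of_monic hA]
    rw [eval_multiset_prod, Multiset.map_map]
    simp [Function.comp]
  set cA := Multiset.card A.roots
  set cB := Multiset.card B.roots
  have hL : (A.roots.map fun a => B.eval a).prod
      = B.leadingCoeff ^ cA * (B.roots.map fun b => (A.roots.map fun a => a - b).prod).prod := by
    calc (A.roots.map fun a => B.eval a).prod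
        = (A.roots.map fun a => B.leadingCoeff * (B.roots.map fun b => a - b).prod).prod := by
          simp only [hevalB]
      _ = B.leadingCoeff ^ cA * (A.roots.map fun a => (B.roots.map fun b => a - b).prod).prod :=
          multiset_prod_map_const_mul _ _ _
      _ = B.leadingCoeff ^ cA * (B.roots.map fun b => (A.roots.map fun a => a - b).prod).prod := by
          rw [multiset_prod_prod_comm]
  have hR : (B.roots.map fun b => A.eval b).prod
      = (-1) ^ (cA * cB) * (B.roots.map fun b => (A.roots.map fun a => a - b).prod).prod := by
    calc (B.roots.map fun b => A.eval b).prod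
        = (B.roots.map fun b => (-1) ^ cA * (A.roots.map fun a => a - b).prod).prod := by
          refine congrArg _ (Multiset.map_congr rfl fun b _ => ?_)
          rw [hevalA b]
          have : (A.roots.map fun a => b - a) = A.roots.map fun a => -(a - b) := by
            simp [neg_sub]
          rw [this, multiset_prod_map_neg']
      _ = ((-1) ^ cA) ^ cB * (B.roots.map fun b => (A.roots.map fun a => a - b).prod).prod :=
          multiset_prod_map_const_mul _ _ _
      _ = (-1) ^ (cA * cB) * (B.roots.map fun b => (A.roots.map fun a => a - b).prod).prod := by
          rw [← pow_mul]
  rw [hL, hR]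
  have h1 : (-1 : K) ^ (cA * cB) * (-1) ^ (cA * cB) = 1 := by
    rw [← pow_add, ← two_mul, pow_mul]; norm_num
  calc B.leadingCoeff ^ cA
        * (Multiset.map (fun b => (Multiset.map (fun a => a - b) A.roots).prod) B.roots).prod
      = B.leadingCoeff ^ cA * ((-1 : K) ^ (cA * cB) * (-1) ^ (cA * cB))
        * (Multiset.map (fun b => (Multiset.map (fun a => a - b) A.roots).prod) B.roots).prod := by
        rw [h1, mul_one]
    _ = B.leadingCoeff ^ cA * (-1) ^ (cA * cB) *
        ((-1) ^ (cA * cB) *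
          (Multiset.map (fun b => (Multiset.map (fun a => a - b) A.roots).prod) B.roots).prod) := by
        ring

lemma det_aeval_eq_prod {K : Type*} [Field K] [IsAlgClosed K] {m : ℕ}
    (M : Matrix (Fin m) (Fin m) K) (g : K[X]) :
    (Polynomial.aeval M g).det = (M.charpoly.roots.map fun r => g.eval r).prod := by
  have hq : M.charpoly.Monic := Matrix.charpoly_monic M
  have hqd : M.charpoly.natDegree = m := by simpa using M.charpoly_natDegree_eq_dim
  have hqs : M.charpoly.Splits := IsAlgClosed.splits _
  have hgs : g.Splits := IsAlgClosed.splits _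
  have hcardq : Multiset.card M.charpoly.roots = m := by
    simpa [hqd] using splits_iff_card_roots.mp hqs
  have hfac : ∀ r : K, (Polynomial.aeval M (X - C r)).det = (-1) ^ m * M.charpoly.eval r := by
    intro r
    have h1 : (Polynomial.aeval M) (X - C r) = M - Matrix.scalar (Fin m) r := by
      rw [map_sub, aeval_X, aeval_C]
      rfl
    have h2 : M.charpoly.eval r = (Matrix.scalar (Fin m) r - M).det := by
      rw [Matrix.charpoly, _root_.eval_det, Matrix.matPolyEquiv_charmatrix]
      rw [eval_sub, eval_X, eval_C]
    rw [h1, h2, show M - Matrix.scalar (Fin m) r = -(Matrix.scalar (Fin m) r - M) from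
      (neg_sub (Matrix.scalar (Fin m) r) M).symm, Matrix.det_neg, Fintype.card_fin]
  have hgfact := hgs.eq_prod_roots
  have hdet : ∀ q : K[X], (Polynomial.aeval M q).det
      = (Matrix.detMonoidHom.comp (Polynomial.aeval M : K[X] →ₐ[K] _).toRingHom.toMonoidHom) q :=
    fun q => rfl
  rw [hdet]
  set h := (Matrix.detMonoidHom.comp (Polynomial.aeval M : K[X] →ₐ[K] _).toRingHom.toMonoidHom)
    with hh
  conv_lhs => rw [hgfact]
  rw [_root_.map_mul, map_multiset_prod, Multiset.map_map]
  have hC : h (C g.leadingCoeff) = g.leadingCoeff ^ m := by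
    rw [hh]
    show (Polynomial.aeval M (C g.leadingCoeff)).det = _
    rw [aeval_C, Algebra.algebraMap_eq_smul_one, Matrix.det_smul, Matrix.det_one,
      Fintype.card_fin, mul_one]
  have hmapped : (g.roots.map fun r => h ((X - C r))) =
      g.roots.map fun r => (-1) ^ m * M.charpoly.eval r := by
    refine Multiset.map_congr rfl fun r _ => ?_
    rw [hh]; exact hfac r
  rw [show (Multiset.map (h ∘ fun a => X - C a) g.roots) = g.roots.map fun r => h ((X - C r))
    from rfl, hmapped, multiset_prod_map_const_mul, hC]
  rw [key_swap M.charpoly g hq hqs hgs, hcardq]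
  rw [← pow_mul]
  ring

lemma map_det_aeval_int {S : Type*} [CommRing S] {m : ℕ} (ψ : ℤ →+* S)
    (M : Matrix (Fin m) (Fin m) ℤ) (g : ℤ[X]) :
    ψ (Polynomial.aeval M g).det = (Polynomial.aeval (M.map ψ) g).det := by
  rw [RingHom.map_det]
  congr 1
  show ψ.mapMatrix (Polynomial.aeval M g) = _
  rw [aeval_def, aeval_def, hom_eval₂]
  congr 1
  · exact Subsingleton.elim _ _

lemma det_aeval_int_cast {K : Type*} [Field K] [IsAlgClosed K] {m : ℕ}
    (M : Matrix (Fin m) (Fin m) ℤ) (g : ℤ[X]) :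
    (((Polynomial.aeval M g).det : ℤ) : K)
      = ((M.map (Int.castRingHom K)).charpoly.roots.map
          fun r => (g.map (Int.castRingHom K)).eval r).prod := by
  have h0 : (((Polynomial.aeval M g).det : ℤ) : K)
      = (Int.castRingHom K) (Polynomial.aeval M g).det := rfl
  rw [h0, map_det_aeval_int, ← det_aeval_eq_prod]
  congr 1
  rw [← algebraMap_int_eq, aeval_map_algebraMap]

lemma minpoly_adjoinRoot_monic {F : ℤ[X]} (hF : F.Monic) :
    minpoly ℤ (AdjoinRoot.root F) = F := by
  refine (minpoly.unique' ℤ _ hF ?_ ?_).symm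
  · rw [AdjoinRoot.aeval_eq, AdjoinRoot.mk_self]
  · intro q hq
    by_contra hcon
    push_neg at hcon
    obtain ⟨hq0, hq1⟩ := hcon
    rw [AdjoinRoot.aeval_eq, AdjoinRoot.mk_eq_zero] at hq1
    have := Polynomial.degree_le_of_dvd hq1 hq0
    exact absurd (lt_of_le_of_lt this hq) (lt_irrefl _)

lemma charpoly_adjoinRoot {F : ℤ[X]} (hF : F.Monic) :
    (Algebra.leftMulMatrix (AdjoinRoot.powerBasis' hF).basis
      (AdjoinRoot.powerBasis' hF).gen).charpoly = F := by
  rw [charpoly_leftMulMatrix, AdjoinRoot.powerBasis'_gen, minpoly_adjoinRoot_monic hF]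

lemma phi_monic (ℓ : ℕ) (hℓ : 2 ≤ ℓ) : (∑ i ∈ Finset.range ℓ, (X : ℤ[X]) ^ i).Monic :=
  monic_geom_sum_X (by omega)

lemma phi_deg_lt (ℓ : ℕ) :
    (∑ i ∈ Finset.range (ℓ - 1), (X : ℤ[X]) ^ i).degree < ((ℓ - 1 : ℕ) : WithBot ℕ) := by
  refine lt_of_le_of_lt (degree_sum_le _ _) ?_
  rw [Finset.sup_lt_iff (by exact WithBot.bot_lt_coe _)]
  intro i hi
  rw [degree_X_pow]
  exact_mod_cast (Finset.mem_range.mp hi)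

lemma phi_natDegree (ℓ : ℕ) (hℓ : 2 ≤ ℓ) :
    (∑ i ∈ Finset.range ℓ, (X : ℤ[X]) ^ i).natDegree = ℓ - 1 := by
  have h1 : (∑ i ∈ Finset.range ℓ, (X : ℤ[X]) ^ i)
      = (∑ i ∈ Finset.range (ℓ - 1), X ^ i) + X ^ (ℓ - 1) := by
    conv_lhs => rw [show ℓ = (ℓ - 1) + 1 by omega, Finset.sum_range_succ]
  rw [h1]
  apply natDegree_eq_of_degree_eq_some
  rw [degree_add_eq_right_of_degree_lt, degree_X_pow]
  rw [degree_X_pow]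
  exact phi_deg_lt ℓ

lemma phi_coeff_one (ℓ : ℕ) (hℓ : 2 ≤ ℓ) :
    (∑ i ∈ Finset.range ℓ, (X : ℤ[X]) ^ i).coeff 1 = 1 := by
  rw [finset_sum_coeff]
  rw [Finset.sum_congr rfl (fun i _ => coeff_X_pow i 1)]
  rw [Finset.sum_ite_eq (Finset.range ℓ) 1 (fun _ => (1 : ℤ))]
  simp [Finset.mem_range]; omega

end helpers

/-- The discriminant of a monic polynomial `f ∈ ℚ[x]`, computed in `ℂ` via the formula
`disc f = (-1)^(n(n-1)/2) ∏ᵢ f'(rᵢ)`, the product running over the roots `rᵢ` of `f` in `ℂ`. -/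
noncomputable def ratDisc (f : Polynomial ℚ) : ℂ :=
  (-1 : ℂ) ^ (f.natDegree * (f.natDegree - 1) / 2) *
    (((f.map (algebraMap ℚ ℂ)).roots).map
      (fun r => (Polynomial.derivative (f.map (algebraMap ℚ ℂ))).eval r)).prod

/-- for distinct primes `ℓ, p` and coprime positive `n, k`,
`v_p(disc(Φ_ℓ(x)^n + p^k)) = (ℓ-1)(n v_p(n) + k(n-1))`, where
`Φ_ℓ(x) = 1 + x + ⋯ + x^{ℓ-1}`. -/
theorem padic_val_disc_cyclotomic_family (ℓ p n k : ℕ) (hℓ : ℓ.Prime) (hp : p.Prime)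
    (hne : ℓ ≠ p) (hn : 0 < n) (hk : 0 < k) (hcop : Nat.Coprime n k) :
    ∃ d : ℚ,
      (d : ℂ) = ratDisc ((∑ i ∈ Finset.range ℓ, (X : Polynomial ℚ) ^ i) ^ n + C ((p : ℚ) ^ k)) ∧
      padicValRat p d = ((ℓ : ℤ) - 1) * ((n : ℤ) * padicValNat p n + (k : ℤ) * ((n : ℤ) - 1)) := by
  haveI : Fact p.Prime := ⟨hp⟩
  have hℓ2 : 2 ≤ ℓ := hℓ.two_le
  set Φz : ℤ[X] := ∑ i ∈ Finset.range ℓ, X ^ i with hΦz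
  have hΦm : Φz.Monic := phi_monic ℓ hℓ2
  have hΦd : Φz.natDegree = ℓ - 1 := phi_natDegree ℓ hℓ2
  set N := n * (ℓ - 1) with hNdef
  have hNpos : 0 < N := Nat.mul_pos hn (by omega)
  set Fz : ℤ[X] := Φz ^ n + C ((p : ℤ) ^ k) with hFzdef
  have hpowm : (Φz ^ n).Monic := hΦm.pow n
  have hpowdeg : (Φz ^ n).natDegree = N := by rw [hΦm.natDegree_pow, hΦd]
  have hFm : Fz.Monic := by
    refine hpowm.add_of_left (lt_of_le_of_lt degree_C_le ?_)
    rw [degree_eq_natDegree hpowm.ne_zero, hpowdeg]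
    exact_mod_cast hNpos
  have hFd : Fz.natDegree = N := by rw [hFzdef, natDegree_add_C, hpowdeg]
  set Az := Algebra.leftMulMatrix (AdjoinRoot.powerBasis' hFm).basis
    (AdjoinRoot.powerBasis' hFm).gen with hAzdef
  have hchar : Az.charpoly = Fz := charpoly_adjoinRoot hFm
  set D := (Polynomial.aeval Az (derivative Fz)).det with hD_def
  set D1 := (Polynomial.aeval Az Φz).det with hD1_def
  set D2 := (Polynomial.aeval Az (derivative Φz)).det with hD2_def
  -- integer factorization of D
  have hDfact : D = (n : ℤ) ^ N * D1 ^ (n - 1) * D2 := by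
    have hder : derivative Fz = C (n : ℤ) * Φz ^ (n - 1) * derivative Φz := by
      rw [hFzdef, derivative_add, derivative_C, add_zero, derivative_pow]
    have h1 : (Polynomial.aeval Az (C (n : ℤ))).det = (n : ℤ) ^ N := by
      rw [aeval_C, Algebra.algebraMap_eq_smul_one, Matrix.det_smul, Matrix.det_one,
        Fintype.card_fin, mul_one, AdjoinRoot.powerBasis'_dim, hFd]
    have h2 : (Polynomial.aeval Az (Φz ^ (n - 1))).det = D1 ^ (n - 1) := by
      rw [map_pow, Matrix.det_pow]
    rw [hD_def, hder, _root_.map_mul, _root_.map_mul, Matrix.det_mul, Matrix.det_mul, h1, h2]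
  -- complex side
  have hcharC : (Az.map (Int.castRingHom ℂ)).charpoly = Fz.map (Int.castRingHom ℂ) := by
    rw [Matrix.charpoly_map, hchar]
  set fC := Fz.map (Int.castRingHom ℂ) with hfCdef
  set φC := Φz.map (Int.castRingHom ℂ) with hφCdef
  have hfCm : fC.Monic := hFm.map _
  have hfCd : fC.natDegree = N := by rw [hfCdef, hFm.natDegree_map, hFd]
  have hφCm : φC.Monic := hΦm.map _
  have hφCd : φC.natDegree = ℓ - 1 := by rw [hφCdef, hΦm.natDegree_map, hΦd]
  have hfCs : fC.Splits := IsAlgClosed.splits _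
  have hφCs : φC.Splits := IsAlgClosed.splits _
  have hcardfC : Multiset.card fC.roots = N := (splits_iff_card_roots.mp hfCs).trans hfCd
  have hcardφC : Multiset.card φC.roots = ℓ - 1 := (splits_iff_card_roots.mp hφCs).trans hφCd
  have hfCeq : fC = φC ^ n + C ((p : ℂ) ^ k) := by
    rw [hfCdef, hFzdef, Polynomial.map_add, Polynomial.map_pow, Polynomial.map_C, hφCdef]
    congr 1
    rw [eq_intCast]
    push_cast
    ring
  -- value of D1
  have hD1 : D1 = (-1) ^ (N * (ℓ - 1)) * (p : ℤ) ^ (k * (ℓ - 1)) := by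
    apply (Int.cast_injective (α := ℂ))
    have hD1a : ((D1 : ℤ) : ℂ) = (fC.roots.map fun r => φC.eval r).prod := by
      rw [hD1_def, det_aeval_int_cast, hcharC]
    have hconst : (φC.roots.map fun b => fC.eval b).prod = ((p : ℂ) ^ k) ^ (ℓ - 1) := by
      have hc : ∀ b ∈ φC.roots, fC.eval b = (p : ℂ) ^ k := by
        intro b hb
        have hb0 : φC.eval b = 0 := isRoot_of_mem_roots hb
        rw [hfCeq]
        simp [eval_add, eval_pow, eval_C, hb0, zero_pow hn.ne']
      rw [Multiset.map_congr rfl hc, Multiset.map_const', Multiset.prod_replicate, hcardφC]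
    rw [hD1a, key_swap fC φC hfCm hfCs hφCs, hφCm.leadingCoeff, hconst, hcardfC, hcardφC]
    push_cast
    ring
  -- mod p side : D2 is not divisible by p
  set Kp := AlgebraicClosure (ZMod p) with hKpdef
  haveI : CharP Kp p := charP_of_injective_algebraMap (algebraMap (ZMod p) Kp).injective p
  set φK := Φz.map (Int.castRingHom Kp) with hφKdef
  have hφKsum : φK = ∑ i ∈ Finset.range ℓ, (X : Kp[X]) ^ i := by
    rw [hφKdef, hΦz]
    simp [Polynomial.map_sum, Polynomial.map_pow, Polynomial.map_X]
  have hFzK : Fz.map (Int.castRingHom Kp) = φK ^ n := by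
    rw [hFzdef, Polynomial.map_add, Polynomial.map_pow, Polynomial.map_C, hφKdef]
    have hp0 : ((Int.castRingHom Kp) ((p : ℤ) ^ k)) = 0 := by
      rw [map_pow]
      have h00 : (Int.castRingHom Kp) ((p : ℕ) : ℤ) = ((p : ℕ) : Kp) := by
        rw [eq_intCast, Int.cast_natCast]
      rw [h00, CharP.cast_eq_zero Kp p, zero_pow hk.ne']
    rw [hp0, C_0, add_zero]
  have hderφK : (derivative Φz).map (Int.castRingHom Kp) = derivative φK := by
    rw [hφKdef, derivative_map]
  have hroot_ne : ∀ b ∈ φK.roots, (derivative φK).eval b ≠ 0 := by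
    intro b hb hb0
    have hbroot : φK.eval b = 0 := isRoot_of_mem_roots hb
    have hgeom : φK * (X - 1) = X ^ ℓ - 1 := by
      rw [hφKsum]
      exact geom_sum_mul X ℓ
    have hbpow : b ^ ℓ = 1 := by
      have h5 := congrArg (eval b) hgeom
      simp only [eval_mul, eval_sub, eval_pow, eval_X, eval_one, hbroot, zero_mul] at h5
      linear_combination -h5
    have h3 : derivative (φK * (X - 1)) = derivative ((X : Kp[X]) ^ ℓ - 1) := by rw [hgeom]
    rw [derivative_mul, derivative_sub, derivative_X, derivative_one, sub_zero, mul_one,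
      derivative_sub, derivative_one, derivative_X_pow, sub_zero] at h3
    have h4 := congrArg (eval b) h3
    simp only [eval_add, eval_mul, eval_sub, eval_X, eval_one, eval_C, eval_pow, hbroot,
      add_zero, hb0, zero_mul] at h4
    have hl0 : (ℓ : Kp) ≠ 0 := by
      rw [Ne, CharP.cast_eq_zero_iff Kp p]
      intro hdvd
      exact hne ((Nat.prime_dvd_prime_iff_eq hp hℓ).mp hdvd).symm
    have hbne : b ≠ 0 := by
      intro h
      rw [h, zero_pow (by omega : ℓ ≠ 0)] at hbpow
      exact zero_ne_one hbpow
    exact (mul_ne_zero hl0 (pow_ne_zero _ hbne)) h4.symm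
  have hψKD2 : ((D2 : ℤ) : Kp) ≠ 0 := by
    have hD2K : ((D2 : ℤ) : Kp)
        = ((φK.roots.map fun r => (derivative φK).eval r).prod) ^ n := by
      rw [hD2_def, det_aeval_int_cast, Matrix.charpoly_map, hchar, hFzK, roots_pow,
        Multiset.map_nsmul, Multiset.prod_nsmul, hderφK]
    rw [hD2K]
    apply pow_ne_zero
    apply Multiset.prod_ne_zero
    intro h0
    obtain ⟨b, hb, hb0⟩ := Multiset.mem_map.mp h0
    exact hroot_ne b hb hb0
  have hD2ne : D2 ≠ 0 := by
    intro h
    rw [h] at hψKD2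
    simp at hψKD2
  have hpD2 : ¬ (p : ℤ) ∣ D2 := by
    intro hdvd
    apply hψKD2
    have hcomp : (Int.castRingHom Kp)
        = (algebraMap (ZMod p) Kp).comp (Int.castRingHom (ZMod p)) := Subsingleton.elim _ _
    have : ((D2 : ℤ) : Kp) = (algebraMap (ZMod p) Kp) ((D2 : ZMod p)) := by
      rw [show ((D2 : ℤ) : Kp) = (Int.castRingHom Kp) D2 from rfl, hcomp]
      rfl
    rw [this, (ZMod.intCast_zmod_eq_zero_iff_dvd D2 p).mpr hdvd, map_zero]
  -- the polynomial from the statement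
  have hFq : ((∑ i ∈ Finset.range ℓ, (X : Polynomial ℚ) ^ i) ^ n + C ((p : ℚ) ^ k))
      = Fz.map (Int.castRingHom ℚ) := by
    rw [hFzdef, hΦz, Polynomial.map_add, Polynomial.map_pow, Polynomial.map_C,
      Polynomial.map_sum]
    push_cast
    simp [Polynomial.map_pow, Polynomial.map_X]
  have hmm : (Fz.map (Int.castRingHom ℚ)).map (algebraMap ℚ ℂ) = fC := by
    rw [Polynomial.map_map, hfCdef]
    congr 1
  have hD : ((D : ℤ) : ℂ) = (fC.roots.map fun r => (derivative fC).eval r).prod := by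
    have hd0 : (derivative Fz).map (Int.castRingHom ℂ) = derivative fC := by
      rw [hfCdef, derivative_map]
    rw [hD_def, det_aeval_int_cast, hcharC, hd0]
  refine ⟨(-1 : ℚ) ^ (N * (N - 1) / 2) * (D : ℚ), ?_, ?_⟩
  · -- discriminant identity
    simp only [ratDisc]
    rw [hFq, hmm, hFm.natDegree_map, hFd]
    push_cast
    rw [hD]
  · -- valuation computation
    have hn0 : (n : ℚ) ≠ 0 := Nat.cast_ne_zero.mpr hn.ne'
    have hp0 : (p : ℚ) ≠ 0 := Nat.cast_ne_zero.mpr hp.pos.ne'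
    have hD2q : ((D2 : ℤ) : ℚ) ≠ 0 := Int.cast_ne_zero.mpr hD2ne
    have hs : padicValRat p ((n : ℚ) ^ N * ((p : ℚ) ^ (k * (ℓ - 1) * (n - 1)) * ((D2 : ℤ) : ℚ)))
        = (N : ℤ) * padicValNat p n + ((k * (ℓ - 1) * (n - 1) : ℕ) : ℤ) := by
      rw [padicValRat.mul (pow_ne_zero _ hn0) (mul_ne_zero (pow_ne_zero _ hp0) hD2q),
        padicValRat.mul (pow_ne_zero _ hp0) hD2q,
        padicValRat.pow (n : ℚ), padicValRat.pow (p : ℚ),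
        padicValRat.self hp.one_lt, padicValRat.of_nat,
        padicValRat.of_int, padicValInt.eq_zero_of_not_dvd hpD2]
      push_cast
      ring
    have hdq : (-1 : ℚ) ^ (N * (N - 1) / 2) * (D : ℚ)
        = (-1 : ℚ) ^ (N * (N - 1) / 2 + N * (ℓ - 1) * (n - 1))
          * ((n : ℚ) ^ N * ((p : ℚ) ^ (k * (ℓ - 1) * (n - 1)) * ((D2 : ℤ) : ℚ))) := by
      rw [hDfact, hD1]
      push_cast
      ring
    have hfinal : (N : ℤ) * padicValNat p n + ((k * (ℓ - 1) * (n - 1) : ℕ) : ℤ)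
        = ((ℓ : ℤ) - 1) * ((n : ℤ) * padicValNat p n + (k : ℤ) * ((n : ℤ) - 1)) := by
      rw [hNdef]
      push_cast [Nat.cast_sub (show 1 ≤ ℓ by omega), Nat.cast_sub (show 1 ≤ n by omega)]
      ring
    rcases neg_one_pow_eq_or ℚ (N * (N - 1) / 2 + N * (ℓ - 1) * (n - 1)) with hsgn | hsgn
    · rw [hdq, hsgn, one_mul, hs, hfinal]
    · rw [hdq, hsgn, neg_one_mul, padicValRat.neg, hs, hfinal]
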